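/- Let q ≥ 2 be an integer and β > 1 a real. For an integer ℓ ≥ 0 let P_ℓ be the path with 2ℓ+1 edges, regarded as an edge-interaction gadget whose ports are its two endpoints, and let B_ℓ be its effective interaction in the q-state Potts model at activity β. Then B_0 = β and 0 < B_ℓ − 1 ≤ κ^ℓ (β − 1) for all ℓ ≥ 0, where κ = (β̂−1)(γ̂−1)/(β̂γ̂−1) ∈ (0,1) with β̂ = 1 + (β−1)²/((q−1)(2β+q−2)) and γ̂ = 1 + (β−1)²/(2β+q−2). Consequently, there is a constant C = C(q,β) > 0 such that for every rational r ∈ (0,1/2) there exists a path 𝒫 with at most C·(1 + log(1/r)) edges satisfying 0 < B_𝒫 − 1 < r. -/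

import Mathlib

open Finset
attribute [local instance] Classical.propDecidable
noncomputable section

/-- The finset of edges of a graph on a finite vertex type. -/
def edgeFin {V : Type} [Fintype V] (G : SimpleGraph V) : Finset (Sym2 V) :=
  G.edgeSet.toFinite.toFinset

/-- The number of monochromatic edges among the edges in `E` under the colouring `σ`. -/
def mcount {V : Type} {q : ℕ} (E : Finset (Sym2 V)) (σ : V → Fin q) : ℕ :=
  (E.filter fun e => (e.map σ).IsDiag).card

/-- The Potts weight `β ^ (number of monochromatic edges of G)`. -/
def pW {V : Type} [Fintype V] (G : SimpleGraph V) (q : ℕ) (β : ℝ) (σ : V → Fin q) : ℝ :=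
  β ^ mcount (edgeFin G) σ

/-- Expectation of `f` under the distribution proportional to the weights `w`. -/
def gExp {S : Type} [Fintype S] (w f : S → ℝ) : ℝ :=
  (∑ σ : S, w σ * f σ) / ∑ σ : S, w σ

/-- Conditional expectation of `f` given the event `A`, under the distribution ∝ `w`. -/
def cExp {S : Type} [Fintype S] (w : S → ℝ) (A : S → Prop) (f : S → ℝ) : ℝ :=
  (∑ σ ∈ univ.filter A, w σ * f σ) / ∑ σ ∈ univ.filter A, w σ

/-- Probability of the event `A` under the distribution ∝ `w`. -/
def prW {S : Type} [Fintype S] (w : S → ℝ) (A : S → Prop) : ℝ :=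
  (∑ σ ∈ univ.filter A, w σ) / ∑ σ : S, w σ

/-- Conditional probability of `A` given `B` under the distribution ∝ `w`. -/
def cprW {S : Type} [Fintype S] (w : S → ℝ) (A B : S → Prop) : ℝ :=
  (∑ σ ∈ univ.filter (fun σ => A σ ∧ B σ), w σ) / ∑ σ ∈ univ.filter B, w σ

/-- The susceptibility `𝒮_{q,β}(G)`: the average number of monochromatic edges. -/
def susc {V : Type} [Fintype V] (G : SimpleGraph V) (q : ℕ) (β : ℝ) : ℝ :=
  gExp (pW G q β) (fun σ => (mcount (edgeFin G) σ : ℝ))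

/-- The degree of a vertex. -/
def deg {V : Type} [Fintype V] (G : SimpleGraph V) (v : V) : ℕ :=
  (univ.filter fun w => G.Adj v w).card

/-- An edge-interaction gadget: a connected (series-parallel) graph with two distinct
distinguished vertices (ports), each of degree one. -/
def IsEdgeGadget {V : Type} [Fintype V] (E : SimpleGraph V) (ρ ρ' : V) : Prop :=
  E.Connected ∧ ρ ≠ ρ' ∧ deg E ρ = 1 ∧ deg E ρ' = 1

/-- The effective interaction `B_ℰ = μ(σ ρ = σ ρ' = c₀) / μ(σ ρ = c₀, σ ρ' = c₁)`. -/
def effB {V : Type} [Fintype V] (E : SimpleGraph V) (q : ℕ) (β : ℝ) (ρ ρ' : V)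
    (c₀ c₁ : Fin q) : ℝ :=
  prW (pW E q β) (fun σ => σ ρ = c₀ ∧ σ ρ' = c₀) /
    prW (pW E q β) (fun σ => σ ρ = c₀ ∧ σ ρ' = c₁)

/-- The susceptibility gap `S_ℰ = E[m_ℰ | σρ = σρ'] - E[m_ℰ | σρ ≠ σρ']`. -/
def sGap {V : Type} [Fintype V] (E : SimpleGraph V) (q : ℕ) (β : ℝ) (ρ ρ' : V) : ℝ :=
  cExp (pW E q β) (fun σ => σ ρ = σ ρ') (fun σ => (mcount (edgeFin E) σ : ℝ)) -
    cExp (pW E q β) (fun σ => σ ρ ≠ σ ρ') (fun σ => (mcount (edgeFin E) σ : ℝ))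

namespace Stmt4Aux

def tw (q : ℕ) (β : ℝ) (a b : Fin q) : ℝ := if a = b then β else 1

def ab (q : ℕ) (β : ℝ) : ℕ → ℝ × ℝ
  | 0 => (1, 0)
  | (k+1) => (β * (ab q β k).1 + ((q:ℝ)-1) * (ab q β k).2,
      (ab q β k).1 + (β + (q:ℝ) - 2) * (ab q β k).2)

lemma ab_eq (q : ℕ) (hq : (q:ℝ) ≠ 0) (β : ℝ) : ∀ k, ab q β k =
    (((β+(q:ℝ)-1)^k + ((q:ℝ)-1)*(β-1)^k)/q, ((β+(q:ℝ)-1)^k - (β-1)^k)/q) := by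
  intro k
  induction k with
  | zero =>
    rw [show ab q β 0 = (1,0) from rfl, Prod.ext_iff]
    constructor <;> simp <;> field_simp
  | succ k ih =>
    rw [show ab q β (k+1) = (β * (ab q β k).1 + ((q:ℝ)-1) * (ab q β k).2,
      (ab q β k).1 + (β + (q:ℝ) - 2) * (ab q β k).2) from rfl, ih, Prod.ext_iff]
    constructor <;> simp only [] <;> rw [pow_succ, pow_succ] <;> field_simp <;> ring

def pe (k : ℕ) (i : Fin k) : Sym2 (Fin (k+1)) := s(i.castSucc, i.succ)

lemma pe_inj (k : ℕ) : Function.Injective (pe k) := by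
  intro i j h
  rw [pe, pe, Sym2.eq_iff] at h
  rcases h with ⟨h1, h2⟩ | ⟨h1, h2⟩
  · exact Fin.castSucc_injective _ h1
  · have a1 : (i.val : ℕ) = j.val + 1 := congrArg Fin.val h1
    have a2 : (i.val : ℕ) + 1 = j.val := congrArg Fin.val h2
    omega

lemma edgeFin_path (k : ℕ) :
    edgeFin (SimpleGraph.pathGraph (k+1)) = Finset.image (pe k) univ := by
  ext e
  induction e with
  | _ u v =>
    simp only [edgeFin, Set.Finite.mem_toFinset, SimpleGraph.mem_edgeSet,
      SimpleGraph.pathGraph_adj, Finset.mem_image, Finset.mem_univ, true_and]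
    constructor
    · rintro (h | h)
      · refine ⟨⟨u.val, by omega⟩, ?_⟩
        rw [pe, Sym2.eq_iff]
        left
        exact ⟨Fin.ext rfl, Fin.ext (by simp [Fin.val_succ]; omega)⟩
      · refine ⟨⟨v.val, by omega⟩, ?_⟩
        rw [pe, Sym2.eq_iff]
        right
        exact ⟨Fin.ext rfl, Fin.ext (by simp [Fin.val_succ]; omega)⟩
    · rintro ⟨i, hi⟩
      rw [pe, Sym2.eq_iff] at hi
      rcases hi with ⟨h1, h2⟩ | ⟨h1, h2⟩
      · left
        have := congrArg Fin.val h1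
        have := congrArg Fin.val h2
        simp [Fin.val_succ] at *
        omega
      · right
        have := congrArg Fin.val h1
        have := congrArg Fin.val h2
        simp [Fin.val_succ] at *
        omega

lemma mcount_path (q k : ℕ) (σ : Fin (k+1) → Fin q) :
    mcount (edgeFin (SimpleGraph.pathGraph (k+1))) σ
      = (univ.filter fun i : Fin k => σ i.castSucc = σ i.succ).card := by
  rw [mcount, edgeFin_path, Finset.filter_image]
  rw [Finset.card_image_of_injective _ (pe_inj k)]
  congr 1
  refine Finset.filter_congr fun i _ => ?_
  rw [pe]
  simp [Sym2.map_pair_eq, Sym2.mk_isDiag_iff]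

lemma pW_path (q k : ℕ) (β : ℝ) (σ : Fin (k+1) → Fin q) :
    pW (SimpleGraph.pathGraph (k+1)) q β σ = ∏ i : Fin k, tw q β (σ i.castSucc) (σ i.succ) := by
  rw [pW, mcount_path]
  rw [← Finset.prod_filter_mul_prod_filter_not univ (fun i : Fin k => σ i.castSucc = σ i.succ)
    (fun i => tw q β (σ i.castSucc) (σ i.succ))]
  rw [Finset.prod_eq_pow_card (fun i hi => show tw q β (σ i.castSucc) (σ i.succ) = β by
    rw [tw, if_pos (Finset.mem_filter.mp hi).2])]
  rw [Finset.prod_eq_one (fun i hi => show tw q β (σ i.castSucc) (σ i.succ) = 1 by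
    rw [tw, if_neg (Finset.mem_filter.mp hi).2])]
  rw [mul_one]

section ClassicalSec
attribute [local instance 2000] Classical.propDecidable

def F (q : ℕ) (β : ℝ) (k : ℕ) (c c' : Fin q) : ℝ :=
  ∑ σ : Fin (k+1) → Fin q,
    if σ 0 = c ∧ σ (Fin.last k) = c'
    then ∏ i : Fin k, tw q β (σ i.castSucc) (σ i.succ) else 0

lemma F_zero (q : ℕ) (β : ℝ) (c c' : Fin q) :
    F q β 0 c c' = if c = c' then 1 else 0 := by
  rw [F]
  rw [← (Equiv.funUnique (Fin 1) (Fin q)).symm.sum_comp]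
  simp only [Equiv.funUnique_symm_apply, Fin.prod_univ_zero, Function.const_apply]
  show (∑ x : Fin q, if x = c ∧ x = c' then (1:ℝ) else 0) = _
  by_cases h : c = c'
  · subst h; simp
  · rw [if_neg h]
    apply Finset.sum_eq_zero
    intro x _
    rw [if_neg]
    rintro ⟨rfl, rfl⟩
    exact h rfl

lemma F_succ (q : ℕ) (β : ℝ) (k : ℕ) (c c' : Fin q) :
    F q β (k+1) c c' = ∑ d : Fin q, F q β k c d * tw q β d c' := by
  have hsnoc : ∀ (y : Fin (k+1) → Fin q) (x : Fin q),
      ∏ i : Fin (k+1), tw q β ((Fin.snoc y x : Fin (k+2) → Fin q) i.castSucc)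
        ((Fin.snoc y x : Fin (k+2) → Fin q) i.succ)
      = (∏ i : Fin k, tw q β (y i.castSucc) (y i.succ)) * tw q β (y (Fin.last k)) x := by
    intro y x
    rw [Fin.prod_univ_castSucc]
    congr 1
    · refine Finset.prod_congr rfl fun i _ => ?_
      rw [Fin.succ_castSucc, Fin.snoc_castSucc, Fin.snoc_castSucc]
    · rw [Fin.succ_last, Fin.snoc_last, Fin.snoc_castSucc]
  have h0 : ∀ (y : Fin (k+1) → Fin q) (x : Fin q),
      (Fin.snoc y x : Fin (k+2) → Fin q) 0 = y 0 := by
    intro y x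
    have : (0 : Fin (k+2)) = (0 : Fin (k+1)).castSucc := rfl
    rw [this, Fin.snoc_castSucc]
  rw [F]
  rw [← (Fin.snocEquiv (fun _ : Fin (k+2) => Fin q)).sum_comp]
  simp only [Fin.snocEquiv_apply]
  rw [Fintype.sum_prod_type]
  have L : (∑ x : Fin q, ∑ y : Fin (k+1) → Fin q,
      (if (Fin.snoc (x, y).2 (x, y).1 : Fin (k+2) → Fin q) 0 = c ∧
          (Fin.snoc (x, y).2 (x, y).1 : Fin (k+2) → Fin q) (Fin.last (k + 1)) = c' then
          ∏ i : Fin (k + 1), tw q β ((Fin.snoc (x, y).2 (x, y).1 : Fin (k+2) → Fin q) i.castSucc)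
            ((Fin.snoc (x, y).2 (x, y).1 : Fin (k+2) → Fin q) i.succ) else 0))
      = ∑ y : Fin (k+1) → Fin q, (if y 0 = c then
          (∏ i : Fin k, tw q β (y i.castSucc) (y i.succ)) * tw q β (y (Fin.last k)) c' else 0) := by
    rw [Finset.sum_comm]
    refine Finset.sum_congr rfl fun y _ => ?_
    simp only [h0, Fin.snoc_last, hsnoc]
    rw [Fintype.sum_eq_single c' (fun x hx => by
      rw [if_neg]; rintro ⟨-, rfl⟩; exact hx rfl)]
    simp
  rw [L]
  have R : ∀ d : Fin q, F q β k c d * tw q β d c'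
      = ∑ y : Fin (k+1) → Fin q, (if y 0 = c ∧ y (Fin.last k) = d then
          (∏ i : Fin k, tw q β (y i.castSucc) (y i.succ)) * tw q β d c' else 0) := by
    intro d
    rw [F, Finset.sum_mul]
    refine Finset.sum_congr rfl fun y _ => ?_
    split_ifs <;> simp
  simp only [R]
  rw [Finset.sum_comm]
  refine Finset.sum_congr rfl fun y _ => ?_
  rw [Fintype.sum_eq_single (y (Fin.last k)) (fun d hd => by
    rw [if_neg]; rintro ⟨-, rfl⟩; exact hd rfl)]
  by_cases hy : y 0 = c <;> simp [hy]

lemma cross (q : ℕ) (c c' : Fin q) (x y : ℝ) :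
    ∀ d : Fin q, (if d = c then x else 0) * (if d = c' then y else 0)
      = if d = c then (if c = c' then x * y else 0) else 0 := by
  intro d
  split_ifs with h1 h2 h3 h3 <;> simp_all

lemma sum_indic (q : ℕ) (c : Fin q) (x : ℝ) :
    ∑ d : Fin q, (if d = c then x else 0) = x := by
  rw [Finset.sum_ite_eq' univ c fun _ => x]; simp

lemma F_eq (q : ℕ) (β : ℝ) :
    ∀ k (c c' : Fin q), F q β k c c' = if c = c' then (ab q β k).1 else (ab q β k).2 := by
  intro k
  induction k with
  | zero => intro c c'; rw [F_zero]; rfl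
  | succ k ih =>
    intro c c'
    rw [F_succ]
    have expand : ∀ d : Fin q, F q β k c d * tw q β d c'
        = (ab q β k).2 + (if d = c then (ab q β k).1 - (ab q β k).2 else 0)
          + (ab q β k).2 * (if d = c' then β - 1 else 0)
          + (if d = c then (ab q β k).1 - (ab q β k).2 else 0) * (if d = c' then β - 1 else 0) := by
      intro d
      rw [ih c d, tw]
      split_ifs with h1 h2 h2 <;> simp_all <;> ring
    simp only [expand]
    rw [Finset.sum_add_distrib, Finset.sum_add_distrib, Finset.sum_add_distrib]
    rw [Finset.sum_const, sum_indic, ← Finset.mul_sum, sum_indic]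
    simp only [cross q c c' ((ab q β k).1 - (ab q β k).2) (β - 1)]
    rw [sum_indic]
    have hcard : (Finset.univ : Finset (Fin q)).card = q := by simp
    rw [hcard]
    have e1 : (ab q β (k+1)).1 = β * (ab q β k).1 + ((q:ℝ)-1) * (ab q β k).2 := rfl
    have e2 : (ab q β (k+1)).2 = (ab q β k).1 + (β + (q:ℝ) - 2) * (ab q β k).2 := rfl
    rw [nsmul_eq_mul, e1, e2]
    split_ifs <;> ring

lemma sumF (q k : ℕ) (β : ℝ) (c c' : Fin q) :
    ∑ σ ∈ univ.filter (fun σ : Fin (k+1) → Fin q => σ 0 = c ∧ σ (Fin.last k) = c'),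
      pW (SimpleGraph.pathGraph (k+1)) q β σ = F q β k c c' := by
  rw [Finset.sum_filter, F]
  refine Finset.sum_congr rfl fun σ _ => ?_
  by_cases h : σ 0 = c ∧ σ (Fin.last k) = c'
  · rw [if_pos h, if_pos h, pW_path]
  · rw [if_neg h, if_neg h]

lemma Zpos (q k : ℕ) (hq : 0 < q) (β : ℝ) (hβ : 0 < β) :
    0 < ∑ σ : Fin (k+1) → Fin q, pW (SimpleGraph.pathGraph (k+1)) q β σ := by
  haveI : Nonempty (Fin q) := ⟨⟨0, hq⟩⟩
  exact Finset.sum_pos (fun σ _ => pow_pos hβ _) Finset.univ_nonempty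

lemma effB_path (q : ℕ) (hq : 2 ≤ q) (β : ℝ) (hβ : 0 < β) (k : ℕ) :
    effB (SimpleGraph.pathGraph (k+1)) q β (⟨0, Nat.succ_pos k⟩ : Fin (k+1)) ⟨k, Nat.lt_succ_self k⟩
        (⟨0, Nat.lt_of_lt_of_le Nat.zero_lt_two hq⟩ : Fin q) ⟨1, Nat.lt_of_lt_of_le Nat.one_lt_two hq⟩
      = F q β k ⟨0, Nat.lt_of_lt_of_le Nat.zero_lt_two hq⟩ ⟨0, Nat.lt_of_lt_of_le Nat.zero_lt_two hq⟩
        / F q β k ⟨0, Nat.lt_of_lt_of_le Nat.zero_lt_two hq⟩ ⟨1, Nat.lt_of_lt_of_le Nat.one_lt_two hq⟩ := by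
  rw [effB, prW, prW, div_div_div_comm,
    div_self (ne_of_gt (Zpos q k (Nat.lt_of_lt_of_le Nat.zero_lt_two hq) β hβ)), div_one]
  congr 1
  · exact sumF q k β _ _
  · exact sumF q k β _ _

end ClassicalSec
end Stmt4Aux

set_option maxHeartbeats 1000000

open Stmt4Aux

/-- effective interactions of paths.  `B_ℓ` is the effective interaction of the
path with `2ℓ+1` edges; `B₀ = β`, `0 < B_ℓ − 1 ≤ κ^ℓ (β−1)` with `κ ∈ (0,1)`, and consequently
for every rational `r ∈ (0,1/2)` there is a path with `O(log(1/r))` edges whose effective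
interaction lies in `(1, 1+r)`. -/
theorem stmt_4 (q : ℕ) (hq : 2 ≤ q) (β : ℝ) (hβ : 1 < β)
    (βh γh κ : ℝ)
    (hβh : βh = 1 + (β - 1) ^ 2 / (((q : ℝ) - 1) * (2 * β + q - 2)))
    (hγh : γh = 1 + (β - 1) ^ 2 / (2 * β + q - 2))
    (hκ : κ = (βh - 1) * (γh - 1) / (βh * γh - 1))
    (B : ℕ → ℝ)
    (hB : ∀ l : ℕ, B l = effB (SimpleGraph.pathGraph (2 * l + 2)) q β
      ⟨0, by omega⟩ ⟨2 * l + 1, by omega⟩ ⟨0, by omega⟩ ⟨1, by omega⟩) :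
    B 0 = β ∧ (0 < κ ∧ κ < 1) ∧
    (∀ l : ℕ, 0 < B l - 1 ∧ B l - 1 ≤ κ ^ l * (β - 1)) ∧
    ∃ C : ℝ, 0 < C ∧ ∀ r : ℚ, 0 < r → (r : ℝ) < 1 / 2 →
      ∃ m : ℕ, 1 ≤ m ∧ (m : ℝ) ≤ C * (1 + Real.log (1 / (r : ℝ))) ∧
        0 < effB (SimpleGraph.pathGraph (m + 1)) q β
            ⟨0, by omega⟩ ⟨m, by omega⟩ ⟨0, by omega⟩ ⟨1, by omega⟩ - 1 ∧
        effB (SimpleGraph.pathGraph (m + 1)) q β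
            ⟨0, by omega⟩ ⟨m, by omega⟩ ⟨0, by omega⟩ ⟨1, by omega⟩ - 1 < (r : ℝ) := by
  have hβ0 : (0:ℝ) < β := by linarith
  have hq2 : (2:ℝ) ≤ (q:ℝ) := by exact_mod_cast hq
  have hqR : (q:ℝ) ≠ 0 := by linarith
  have hD : (0:ℝ) < β - 1 := by linarith
  have hS : (0:ℝ) < β + (q:ℝ) - 1 := by linarith
  have hDS : β - 1 < β + (q:ℝ) - 1 := by linarith
  set D : ℝ := β - 1 with hDdef
  set S : ℝ := β + (q:ℝ) - 1 with hSdef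
  have hne01 : (⟨0, by omega⟩ : Fin q) ≠ ⟨1, by omega⟩ := by
    intro h
    exact absurd (congrArg Fin.val h) (by simp)
  -- values of a and b
  have haval : ∀ k, (ab q β k).1 = (S^k + ((q:ℝ)-1)*D^k)/q := fun k => by
    rw [ab_eq q hqR β k]
  have hbval : ∀ k, (ab q β k).2 = (S^k - D^k)/q := fun k => by
    rw [ab_eq q hqR β k]
  have hbpos : ∀ k : ℕ, 0 < k → 0 < (ab q β k).2 := by
    intro k hk
    rw [hbval]
    have h1 : D^k < S^k := pow_lt_pow_left₀ hDS (le_of_lt hD) (by omega)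
    apply div_pos (by linarith) (by linarith)
  -- B in terms of a, b
  have hBval : ∀ l : ℕ, B l = (ab q β (2*l+1)).1 / (ab q β (2*l+1)).2 := by
    intro l
    rw [hB l]
    have h := effB_path q hq β hβ0 (2*l+1)
    rw [F_eq, F_eq, if_pos rfl, if_neg hne01] at h
    exact h
  -- κ value
  have hE : (0:ℝ) < 2*β + (q:ℝ) - 2 := by linarith
  have hEne : (2*β + (q:ℝ) - 2) ≠ 0 := ne_of_gt hE
  have hq1ne : ((q:ℝ) - 1) ≠ 0 := by linarith
  have hSq : S^2 = (q:ℝ)*(2*β+(q:ℝ)-2) + D^2 := by rw [hSdef, hDdef]; ring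
  have e3 : βh * γh - 1 = (D^2*S^2)/(((q:ℝ)-1)*(2*β+(q:ℝ)-2)^2) := by
    rw [hβh, hγh, hSq]
    field_simp
    ring
  have hκval : κ = (D/S)^2 := by
    rw [hκ, e3, hβh, hγh]
    have hSne : S ≠ 0 := ne_of_gt hS
    field_simp
    ring
  have hκ0 : 0 < κ := by
    rw [hκval]; positivity
  have hκ1 : κ < 1 := by
    rw [hκval]
    have h1 : D/S < 1 := (div_lt_one hS).mpr hDS
    have h0 : 0 ≤ D/S := le_of_lt (div_pos hD hS)
    nlinarith
  -- main estimates
  have hmain : ∀ l : ℕ, 0 < B l - 1 ∧ B l - 1 ≤ κ ^ l * (β - 1) := by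
    intro l
    have hb := hbpos (2*l+1) (by omega)
    have hbne : (ab q β (2*l+1)).2 ≠ 0 := ne_of_gt hb
    have hBm1 : B l - 1 = D^(2*l+1) / (ab q β (2*l+1)).2 := by
      rw [hBval l, div_sub_one hbne]
      congr 1
      rw [haval, hbval]
      field_simp
      ring
    constructor
    · rw [hBm1]
      positivity
    · rw [hBm1, hκval]
      have hbig : S^(2*l) ≤ (ab q β (2*l+1)).2 := by
        rw [hbval]
        rw [le_div_iff₀ (by linarith : (0:ℝ) < (q:ℝ))]
        have hp : D^(2*l) ≤ S^(2*l) := pow_le_pow_left₀ (le_of_lt hD) (le_of_lt hDS) _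
        have e1 : S^(2*l+1) = S^(2*l)*S := by ring
        have e2 : D^(2*l+1) = D^(2*l)*D := by ring
        have hSq' : S = (q:ℝ) + D := by rw [hSdef, hDdef]; ring
        nlinarith [pow_pos hS (2*l), pow_pos hD (2*l)]
      have hk : ((D/S)^2)^l * (β - 1) = D^(2*l+1)/S^(2*l) := by
        rw [← pow_mul, div_pow, ← hDdef]
        field_simp
        ring
      rw [hk]
      exact (div_le_div_iff_of_pos_left (pow_pos hD _) (hbpos (2*l+1) (by omega)) (pow_pos hS _)).mpr hbig
  -- B 0 = β
  have h1 : (ab q β 1).1 = β := by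
    rw [haval, hSdef, hDdef]
    field_simp
    ring
  have h2 : (ab q β 1).2 = 1 := by
    rw [hbval, hSdef, hDdef]
    field_simp
    ring
  have hB0 : B 0 = β := by
    have h := hBval 0
    norm_num at h
    rw [h, h1, h2, div_one]
  refine ⟨hB0, ⟨hκ0, hκ1⟩, hmain, ?_⟩
  -- final existence
  set c := -Real.log κ with hcdef
  have hcpos : 0 < c := by
    have := Real.log_neg hκ0 hκ1
    rw [hcdef]; linarith
  set A : ℝ := max 0 (Real.log D) with hAdef
  have hA0 : 0 ≤ A := le_max_left _ _
  refine ⟨max (2*A/c + 5) (2/c), lt_of_lt_of_le (by positivity) (le_max_left _ _), ?_⟩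
  intro r hr hr2
  have hrpos : (0:ℝ) < (r:ℝ) := by exact_mod_cast hr
  set L := Real.log (1/(r:ℝ)) with hLdef
  have hL : 0 < L := Real.log_pos (one_lt_one_div hrpos (by linarith))
  set x := (Real.log D + L)/c with hxdef
  set l := ⌈x⌉₊ + 1 with hldef
  set C := max (2*A/c + 5) (2/c) with hCdef
  clear_value c A L x l C
  refine ⟨2*l+1, by omega, ?_, ?_, ?_⟩
  · -- size bound
    have hx : x ≤ (A + L)/c := by
      rw [hxdef]
      have hDA : Real.log D ≤ A := by rw [hAdef]; exact le_max_right _ _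
      apply div_le_div_of_nonneg_right ?_ hcpos.le
      · linarith
      
    have hceil : (⌈x⌉₊:ℝ) ≤ (A + L)/c + 1 := by
      calc (⌈x⌉₊:ℝ) ≤ (⌈(A + L)/c⌉₊:ℝ) := by
            exact_mod_cast Nat.ceil_mono hx
        _ ≤ (A + L)/c + 1 := le_of_lt (Nat.ceil_lt_add_one
              (div_nonneg (by linarith) (le_of_lt hcpos)))
    have hC1 : 2*A/c + 5 ≤ C := by rw [hCdef]; exact le_max_left _ _
    have hC2 : 2/c ≤ C := by rw [hCdef]; exact le_max_right _ _
    have hlle : (l:ℝ) ≤ (A + L)/c + 2 := by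
      have h1 : (l:ℝ) = (⌈x⌉₊:ℝ) + 1 := by rw [hldef]; push_cast; ring
      linarith
    have hcast : ((2*l+1:ℕ):ℝ) = 2*(l:ℝ)+1 := by push_cast; ring
    rw [hcast]
    have hcL : (2/c) * L ≤ C * L := mul_le_mul_of_nonneg_right hC2 (le_of_lt hL)
    have h4 : (A+L)/c = A/c + L/c := by ring
    have h5 : 2*(L/c) = 2/c*L := by ring
    have h6 : 2*(A/c) = 2*A/c := by ring
    linarith [hlle, hC1, hcL]
  · -- positivity of effB - 1
    have hgoal : effB (SimpleGraph.pathGraph (2*l+1+1)) q β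
        ⟨0, by omega⟩ ⟨2*l+1, by omega⟩ ⟨0, by omega⟩ ⟨1, by omega⟩ = B l := (hB l).symm
    rw [hgoal]
    exact (hmain l).1
  · -- upper bound
    have hgoal : effB (SimpleGraph.pathGraph (2*l+1+1)) q β
        ⟨0, by omega⟩ ⟨2*l+1, by omega⟩ ⟨0, by omega⟩ ⟨1, by omega⟩ = B l := (hB l).symm
    rw [hgoal]
    have hlc : Real.log D + L < l * c := by
      have h1 : x ≤ (⌈x⌉₊:ℝ) := Nat.le_ceil x
      have h2 : x < (l:ℝ) := by
        rw [hldef]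
        push_cast
        linarith
      have h3 : Real.log D + L = x * c := by
        rw [hxdef]
        field_simp
      rw [h3]
      exact mul_lt_mul_of_pos_right h2 hcpos
    have hsmall : κ^l * D < (r:ℝ) := by
      have hlogs : Real.log (κ^l * D) < Real.log (r:ℝ) := by
        rw [Real.log_mul (pow_ne_zero l (ne_of_gt hκ0)) (ne_of_gt hD), Real.log_pow]
        have hlogκ : Real.log κ = -c := by rw [hcdef]; ring
        have hlogr : Real.log (r:ℝ) = -L := by
          rw [hLdef, one_div, Real.log_inv]
          ring
        rw [hlogκ, hlogr]
        nlinarith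
      exact (Real.log_lt_log_iff (by positivity) hrpos).mp hlogs
    calc B l - 1 ≤ κ^l * (β - 1) := (hmain l).2
      _ < (r:ℝ) := hsmall
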